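/- For all integers a, b ≥ 0, the identity Σ_{c=0}^{min(a,b)} (λ; λ²)_c · [a+b choose 2c, a−c, b−c]_λ · λ^{(a−c)(b−c)+c} = [a+b choose a]_{λ²} · (λ^a + λ^b)/(λ^{a+b} + 1) holds in ℚ(λ). -/

import Mathlib

noncomputable section

/-- The field `ℚ(λ)` of rational functions. -/
abbrev K : Type := RatFunc ℚ

/-- The indeterminate `λ`. -/
def Xq : K := RatFunc.X

/-- `(n)_t = ∏_{i=1}^n (t^i − 1)`. -/
def qfact (t : K) (n : ℕ) : K := ∏ i ∈ Finset.range n, (t ^ (i + 1) - 1)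

/-- `(x; y)_n = ∏_{i=1}^n (1 − x·y^{i−1})`. -/
def qpoch (x y : K) (n : ℕ) : K := ∏ i ∈ Finset.range n, (1 - x * y ^ i)

/-- The Gaussian binomial `[n choose m]_t` (with value `0` out of range). -/
def qbinomN (t : K) (n m : ℕ) : K :=
  if m ≤ n then qfact t n / (qfact t m * qfact t (n - m)) else 0

/-- The `t`-multinomial `[m₁+m₂+m₃ choose m₁, m₂, m₃]_t`. -/
def qmul3 (t : K) (m1 m2 m3 : ℕ) : K :=
  qfact t (m1 + m2 + m3) / (qfact t m1 * qfact t m2 * qfact t m3)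

/- ### Auxiliary development -/

lemma ne_of_eval2 (p : Polynomial ℚ) (h : p.eval 2 ≠ 0) :
    (algebraMap (Polynomial ℚ) K) p ≠ 0 := by
  apply RatFunc.algebraMap_ne_zero
  intro h0; rw [h0] at h; simp at h

lemma Xq_pow_sub_one_ne (k : ℕ) (hk : k ≠ 0) : (Xq ^ k - 1 : K) ≠ 0 := by
  have : (Xq ^ k - 1 : K) = algebraMap (Polynomial ℚ) K (Polynomial.X ^ k - 1) := by
    simp [Xq, RatFunc.algebraMap_X]
  rw [this]
  apply ne_of_eval2
  simp only [Polynomial.eval_sub, Polynomial.eval_pow, Polynomial.eval_X, Polynomial.eval_one]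
  have : (1:ℚ) < 2 ^ k := one_lt_pow₀ one_lt_two hk
  linarith

lemma Xq_pow_add_pow_ne (a b : ℕ) : (Xq ^ a + Xq ^ b : K) ≠ 0 := by
  have : (Xq ^ a + Xq ^ b : K)
      = algebraMap (Polynomial ℚ) K (Polynomial.X ^ a + Polynomial.X ^ b) := by
    simp [Xq, RatFunc.algebraMap_X]
  rw [this]
  apply ne_of_eval2
  simp only [Polynomial.eval_add, Polynomial.eval_pow, Polynomial.eval_X]
  positivity

lemma Xq_pow_add_one_ne (k : ℕ) : (Xq ^ k + 1 : K) ≠ 0 := by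
  simpa using Xq_pow_add_pow_ne k 0

lemma Xq_ne : (Xq : K) ≠ 0 := RatFunc.X_ne_zero

lemma qfact_succ (t : K) (n : ℕ) : qfact t (n + 1) = qfact t n * (t ^ (n + 1) - 1) := by
  simp [qfact, Finset.prod_range_succ]

lemma qpoch_succ (x y : K) (n : ℕ) : qpoch x y (n + 1) = qpoch x y n * (1 - x * y ^ n) := by
  simp [qpoch, Finset.prod_range_succ]

lemma qfact_Xq_ne (n : ℕ) : qfact Xq n ≠ 0 := by
  unfold qfact
  exact Finset.prod_ne_zero_iff.mpr fun i _ => Xq_pow_sub_one_ne (i + 1) (by omega)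

lemma qfact_Xq2_ne (n : ℕ) : qfact (Xq ^ 2) n ≠ 0 := by
  unfold qfact
  refine Finset.prod_ne_zero_iff.mpr fun i _ => ?_
  rw [← pow_mul]
  exact Xq_pow_sub_one_ne (2 * (i + 1)) (by omega)

/-- The summand. -/
def Fq (a b c : ℕ) : K :=
  qpoch Xq (Xq ^ 2) c * qmul3 Xq (2 * c) (a - c) (b - c) * Xq ^ ((a - c) * (b - c) + c)

/-- The left-hand side sum. -/
def Sf (a b : ℕ) : K := ∑ c ∈ Finset.range (min a b + 1), Fq a b c

/-- The right-hand side. -/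
def Rf (a b : ℕ) : K :=
  qbinomN (Xq ^ 2) (a + b) a * (Xq ^ a + Xq ^ b) / (Xq ^ (a + b) + 1)

/-- Zeilberger coefficient `x`. -/
def xc (a b : ℕ) : K :=
  Xq ^ b * (Xq ^ a + Xq ^ b) * (Xq ^ (a + b) - 1) / (Xq ^ (2 * a) - 1)

/-- Zeilberger coefficient `y`. -/
def yc (a b : ℕ) : K :=
  -((Xq ^ (a + b) + Xq ^ 2) * (Xq ^ (a + b) - 1) * (Xq ^ (a + b) - Xq))
    / (Xq ^ 2 * (Xq ^ (2 * a) - 1))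

lemma Fq_apply (c i j : ℕ) :
    Fq (c + i) (c + j) c = qpoch Xq (Xq ^ 2) c * qmul3 Xq (2 * c) i j * Xq ^ (i * j + c) := by
  have h1 : c + i - c = i := by omega
  have h2 : c + j - c = j := by omega
  rw [Fq, h1, h2]

set_option maxHeartbeats 3000000 in
/-- The WZ certificate identity. -/
lemma key (c i j : ℕ) :
    Fq (c + i + 1) (c + j + 1) c
      - xc (c + i + 1) (c + j + 1) * Fq (c + i) (c + j + 1) c
      - yc (c + i + 1) (c + j + 1) * Fq (c + i) (c + j) c
    = (1 - Xq ^ (2 * (c + 1))) / (Xq ^ (2 * (c + i + 1)) - 1) * Fq (c + i + 1) (c + j + 1) (c + 1)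
      - (1 - Xq ^ (2 * c)) / (Xq ^ (2 * (c + i + 1)) - 1) * Fq (c + i + 1) (c + j + 1) c := by
  have e1 : c + i + 1 = c + (i + 1) := by omega
  have e2 : c + j + 1 = c + (j + 1) := by omega
  have e3 : c + i + 1 = (c + 1) + i := by omega
  have e4 : c + j + 1 = (c + 1) + j := by omega
  have hF1 : Fq (c + i + 1) (c + j + 1) c
      = qpoch Xq (Xq ^ 2) c * qmul3 Xq (2 * c) (i + 1) (j + 1) * Xq ^ ((i + 1) * (j + 1) + c) := by
    rw [e1, e2, Fq_apply]
  have hF2 : Fq (c + i) (c + j + 1) c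
      = qpoch Xq (Xq ^ 2) c * qmul3 Xq (2 * c) i (j + 1) * Xq ^ (i * (j + 1) + c) := by
    rw [e2, Fq_apply]
  have hF3 : Fq (c + i) (c + j) c
      = qpoch Xq (Xq ^ 2) c * qmul3 Xq (2 * c) i j * Xq ^ (i * j + c) := Fq_apply c i j
  have hF4 : Fq (c + i + 1) (c + j + 1) (c + 1)
      = qpoch Xq (Xq ^ 2) (c + 1) * qmul3 Xq (2 * (c + 1)) i j * Xq ^ (i * j + (c + 1)) := by
    rw [e3, e4, Fq_apply]
  rw [hF1, hF2, hF3, hF4]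
  -- expand the q-multinomials
  have g1 : 2 * c + (i + 1) + (j + 1) = (2 * c + i + j) + 1 + 1 := by omega
  have g2 : 2 * c + i + (j + 1) = (2 * c + i + j) + 1 := by omega
  have g3 : 2 * (c + 1) + i + j = (2 * c + i + j) + 1 + 1 := by omega
  have g4 : 2 * (c + 1) = (2 * c) + 1 + 1 := by omega
  rw [qmul3, qmul3, qmul3, qmul3, g1, g2, g3, g4,
    qfact_succ Xq (2 * c + i + j + 1), qfact_succ Xq (2 * c + i + j),
    qfact_succ Xq (2 * c + 1), qfact_succ Xq (2 * c), qfact_succ Xq i, qfact_succ Xq j,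
    qpoch_succ]
  have hy : (Xq ^ 2 : K) ^ c = Xq ^ (2 * c) := by rw [← pow_mul]
  rw [hy]
  rw [xc, yc]
  have n1 : (Xq ^ (2 * (c + i + 1)) - 1 : K) ≠ 0 := Xq_pow_sub_one_ne _ (by omega)
  have n2 : (Xq ^ (i + 1) - 1 : K) ≠ 0 := Xq_pow_sub_one_ne _ (by omega)
  have n3 : (Xq ^ (j + 1) - 1 : K) ≠ 0 := Xq_pow_sub_one_ne _ (by omega)
  have n4 : (Xq ^ (2 * c + 1) - 1 : K) ≠ 0 := Xq_pow_sub_one_ne _ (by omega)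
  have n5 : (Xq ^ (2 * c + 1 + 1) - 1 : K) ≠ 0 := Xq_pow_sub_one_ne _ (by omega)
  have n6 : qfact Xq (2 * c) ≠ 0 := qfact_Xq_ne _
  have n7 : qfact Xq i ≠ 0 := qfact_Xq_ne _
  have n8 : qfact Xq j ≠ 0 := qfact_Xq_ne _
  have n9 : (Xq : K) ≠ 0 := Xq_ne
  field_simp [n1, n2, n3, n4, n5, n6, n7, n8, n9]
  have hD1 : qfact Xq (2 * c) * (qfact Xq i * (Xq ^ (i + 1) - 1)) * (qfact Xq j * (Xq ^ (j + 1) - 1)) *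
      ((Xq ^ (2 * (c + i + 1)) - 1) * (qfact Xq (2 * c) * qfact Xq i * (qfact Xq j * (Xq ^ (j + 1) - 1)))) ≠ 0 :=
    mul_ne_zero (mul_ne_zero (mul_ne_zero n6 (mul_ne_zero n7 n2)) (mul_ne_zero n8 n3))
      (mul_ne_zero n1 (mul_ne_zero (mul_ne_zero n6 n7) (mul_ne_zero n8 n3)))
  have hB : (Xq ^ (2 * (c + i + 1)) - 1) *
      (qfact Xq (2 * c) * (Xq ^ (2 * c + 1) - 1) * (Xq ^ (2 * c + 1 + 1) - 1) * qfact Xq i * qfact Xq j) ≠ 0 :=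
    mul_ne_zero n1 (mul_ne_zero (mul_ne_zero (mul_ne_zero (mul_ne_zero n6 n4) n5) n7) n8)
  have hE : (Xq ^ (2 * (c + i + 1)) - 1) *
      (qfact Xq (2 * c) * (qfact Xq i * (Xq ^ (i + 1) - 1)) * (qfact Xq j * (Xq ^ (j + 1) - 1))) ≠ 0 :=
    mul_ne_zero n1 (mul_ne_zero (mul_ne_zero n6 (mul_ne_zero n7 n2)) (mul_ne_zero n8 n3))
  ring

lemma Srec (a b : ℕ) (ha : 1 ≤ a) (hab : a ≤ b) :
    Sf a b = xc a b * Sf (a - 1) b + yc a b * Sf (a - 1) (b - 1) := by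
  have hmin1 : min a b = a := min_eq_left hab
  have hsum : ∑ c ∈ Finset.range a,
      (Fq a b c - xc a b * Fq (a - 1) b c - yc a b * Fq (a - 1) (b - 1) c)
      = (1 - Xq ^ (2 * a)) / (Xq ^ (2 * a) - 1) * Fq a b a
        - (1 - Xq ^ (2 * 0)) / (Xq ^ (2 * a) - 1) * Fq a b 0 := by
    rw [← Finset.sum_range_sub (fun c => (1 - Xq ^ (2 * c)) / (Xq ^ (2 * a) - 1) * Fq a b c)]
    refine Finset.sum_congr rfl fun c hc => ?_
    have hc' : c < a := Finset.mem_range.mp hc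
    obtain ⟨i, hi⟩ : ∃ i, a = c + i + 1 := ⟨a - c - 1, by omega⟩
    obtain ⟨j, hj⟩ : ∃ j, b = c + j + 1 := ⟨b - c - 1, by omega⟩
    have h1 : a - 1 = c + i := by omega
    have h2 : b - 1 = c + j := by omega
    rw [h1, h2, hi, hj]
    exact key c i j
  have hga : ((1 : K) - Xq ^ (2 * a)) / (Xq ^ (2 * a) - 1) = -1 := by
    have n : (Xq ^ (2 * a) - 1 : K) ≠ 0 := Xq_pow_sub_one_ne _ (by omega)
    rw [div_eq_iff n]; ring
  have hg0 : ((1 : K) - Xq ^ (2 * 0)) = 0 := by norm_num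
  rw [hga, hg0, zero_div, zero_mul, sub_zero, neg_one_mul] at hsum
  rw [Finset.sum_sub_distrib, Finset.sum_sub_distrib, ← Finset.mul_sum, ← Finset.mul_sum] at hsum
  have hS : Sf a b = ∑ c ∈ Finset.range a, Fq a b c + Fq a b a := by
    rw [Sf, hmin1, Finset.sum_range_succ]
  have hS1 : Sf (a - 1) b = ∑ c ∈ Finset.range a, Fq (a - 1) b c := by
    rw [Sf, min_eq_left (by omega : a - 1 ≤ b)]
    have : a - 1 + 1 = a := by omega
    rw [this]
  have hS2 : Sf (a - 1) (b - 1) = ∑ c ∈ Finset.range a, Fq (a - 1) (b - 1) c := by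
    rw [Sf, min_eq_left (by omega : a - 1 ≤ b - 1)]
    have : a - 1 + 1 = a := by omega
    rw [this]
  rw [hS, hS1, hS2]
  linear_combination hsum

set_option maxHeartbeats 4000000 in
lemma Rrec (a b : ℕ) (ha : 1 ≤ a) (hab : a ≤ b) :
    Rf a b = xc a b * Rf (a - 1) b + yc a b * Rf (a - 1) (b - 1) := by
  obtain ⟨α, rfl⟩ : ∃ α, a = α + 1 := ⟨a - 1, by omega⟩
  obtain ⟨β, rfl⟩ : ∃ β, b = β + 1 := ⟨b - 1, by omega⟩
  simp only [Rf, qbinomN, Nat.add_sub_cancel]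
  rw [if_pos (by omega), if_pos (by omega), if_pos (by omega)]
  have s1 : α + 1 + (β + 1) - (α + 1) = β + 1 := by omega
  have s2 : α + (β + 1) - α = β + 1 := by omega
  have s3 : α + β - α = β := by omega
  rw [s1, s2, s3]
  have f1 : α + 1 + (β + 1) = α + β + 1 + 1 := by omega
  have f2 : α + (β + 1) = α + β + 1 := by omega
  rw [f1, f2, qfact_succ (Xq ^ 2) (α + β + 1), qfact_succ (Xq ^ 2) (α + β),
    qfact_succ (Xq ^ 2) α, qfact_succ (Xq ^ 2) β, xc, yc]
  simp only [← pow_mul]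
  have m1 : qfact (Xq ^ 2) α ≠ 0 := qfact_Xq2_ne _
  have m2 : qfact (Xq ^ 2) β ≠ 0 := qfact_Xq2_ne _
  have m3 : qfact (Xq ^ 2) (α + β) ≠ 0 := qfact_Xq2_ne _
  have m4 : (Xq ^ (2 * (α + 1)) - 1 : K) ≠ 0 := Xq_pow_sub_one_ne _ (by omega)
  have m5 : (Xq ^ (2 * (β + 1)) - 1 : K) ≠ 0 := Xq_pow_sub_one_ne _ (by omega)
  have m6 : (Xq ^ (2 * (α + β + 1)) - 1 : K) ≠ 0 := Xq_pow_sub_one_ne _ (by omega)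
  have m7 : (Xq ^ (2 * (α + β + 1 + 1)) - 1 : K) ≠ 0 := Xq_pow_sub_one_ne _ (by omega)
  have m8 : (Xq ^ (α + β + 1 + 1) + 1 : K) ≠ 0 := Xq_pow_add_one_ne _
  have m9 : (Xq ^ (α + β + 1) + 1 : K) ≠ 0 := Xq_pow_add_one_ne _
  have m10 : (Xq ^ (α + β) + 1 : K) ≠ 0 := Xq_pow_add_one_ne _
  have m11 : (Xq : K) ≠ 0 := Xq_ne
  field_simp [m1, m2, m3, m4, m5, m6, m7, m8, m9, m10, m11]
  have hD : (Xq ^ (2 * (α + 1)) - 1) *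
      (qfact (Xq ^ 2) α * (qfact (Xq ^ 2) β * (Xq ^ (2 * (β + 1)) - 1)) * (Xq ^ (α + β + 1) + 1)) ≠ 0 :=
    mul_ne_zero m4 (mul_ne_zero (mul_ne_zero m1 (mul_ne_zero m2 m5)) m9)
  ring

lemma qfact_zero (t : K) : qfact t 0 = 1 := by simp [qfact]

lemma base (b : ℕ) : Sf 0 b = Rf 0 b := by
  have h1 : Sf 0 b = 1 := by
    rw [Sf, min_eq_left (Nat.zero_le b), Finset.sum_range_one, Fq, qmul3]
    simp only [qpoch, Finset.prod_range_zero, Nat.sub_zero, Nat.zero_sub, Nat.mul_zero,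
      Nat.zero_mul, Nat.zero_add, zero_add, pow_zero, one_mul, mul_one, qfact_zero]
    rw [div_self (qfact_Xq_ne b)]
  have h2 : Rf 0 b = 1 := by
    rw [Rf, qbinomN, if_pos (Nat.zero_le (0 + b))]
    simp only [Nat.sub_zero, Nat.zero_add, zero_add, pow_zero, qfact_zero, one_mul]
    rw [div_self (qfact_Xq2_ne b), one_mul, add_comm, div_self (Xq_pow_add_one_ne b)]
  rw [h1, h2]

lemma Fq_symm (a b c : ℕ) : Fq a b c = Fq b a c := by
  rw [Fq, Fq, qmul3, qmul3]
  have h : 2 * c + (a - c) + (b - c) = 2 * c + (b - c) + (a - c) := by omega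
  have h2 : (a - c) * (b - c) = (b - c) * (a - c) := Nat.mul_comm _ _
  rw [h, h2]
  ring

lemma Sf_symm (a b : ℕ) : Sf a b = Sf b a := by
  rw [Sf, Sf, min_comm b a]
  exact Finset.sum_congr rfl fun c _ => Fq_symm a b c

lemma Rf_symm (a b : ℕ) : Rf a b = Rf b a := by
  rw [Rf, Rf, qbinomN, qbinomN, if_pos (by omega : a ≤ a + b), if_pos (by omega : b ≤ b + a)]
  have h1 : a + b - a = b := by omega
  have h2 : b + a - b = a := by omega
  have h3 : b + a = a + b := by omega
  rw [h1, h2, h3]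
  ring

lemma main : ∀ a b : ℕ, a ≤ b → Sf a b = Rf a b := by
  intro a
  induction a with
  | zero => intro b _; exact base b
  | succ n ih =>
    intro b hb
    have h1 := Srec (n + 1) b (by omega) hb
    have h2 := Rrec (n + 1) b (by omega) hb
    rw [Nat.add_sub_cancel] at h1 h2
    rw [h1, h2, ih b (by omega), ih (b - 1) (by omega)]

lemma final (a b : ℕ) : Sf a b = Rf a b := by
  rcases le_total a b with h | h
  · exact main a b h
  · rw [Sf_symm, Rf_symm]; exact main b a h


/-- For integers `a, b ≥ 0`,
`Σ_{c=0}^{min(a,b)} (λ; λ²)_c · [a+b choose 2c, a−c, b−c]_λ · λ^{(a−c)(b−c)+c}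
  = [a+b choose a]_{λ²} · (λ^a + λ^b)/(λ^{a+b} + 1)` in `ℚ(λ)`. -/
theorem stmt3 (a b : ℕ) :
    ∑ c ∈ Finset.range (min a b + 1),
      qpoch Xq (Xq ^ 2) c * qmul3 Xq (2 * c) (a - c) (b - c) * Xq ^ ((a - c) * (b - c) + c)
    = qbinomN (Xq ^ 2) (a + b) a * (Xq ^ a + Xq ^ b) / (Xq ^ (a + b) + 1) := by
  have h := final a b
  rw [Sf, Rf] at h
  simpa only [Fq] using h
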